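/- arXiv:1812.05923 — 3 statements merged into one kernel-verified Lean document; each statement's English description precedes it below -/
import Mathlib

section
/- Assume the representation setting on [β,l]. Then for every x ∈ [β,l], w''(x) − ω² w(x) = C₂ e^{−iω(x−β)} + (C₁/ω) sin(ω(x−β)) + (1/ω) ∫_β^x sin(ω(x−s)) F(s) ds. -/
open Complex

/-- Second-order representation of `w'''' − ω⁴ w = F` on `[β,l]`: for all `x ∈ [β,l]`,
`w''(x) − ω² w(x) = C₂ e^{−iω(x−β)} + (C₁/ω) sin(ω(x−β)) + (1/ω)∫_β^x sin(ω(x−s)) F(s) ds`,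
where `C₁ = w'''(β) + iω w''(β) − ω² w'(β) − iω³ w(β)` and `C₂ = w''(β) − ω² w(β)`. -/
theorem representation_second_order
    (ω β l : ℝ) (hω : 0 < ω) (hβl : β < l)
    (F : ℝ → ℂ) (hF : Continuous F)
    (w : ℝ → ℂ) (hw : ContDiff ℝ 4 w)
    (hode : ∀ x ∈ Set.Icc β l, iteratedDeriv 4 w x - ((ω^4 : ℝ) : ℂ) * w x = F x)
    (C₁ C₂ : ℂ)
    (hC₁ : C₁ = iteratedDeriv 3 w β + I * ω * iteratedDeriv 2 w β
        - (ω^2 : ℝ) * deriv w β - I * (ω^3 : ℝ) * w β)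
    (hC₂ : C₂ = iteratedDeriv 2 w β - (ω^2 : ℝ) * w β) :
    ∀ x ∈ Set.Icc β l,
      iteratedDeriv 2 w x - (ω^2 : ℝ) * w x
        = C₂ * Complex.exp (-(I * ω * ((x - β : ℝ) : ℂ)))
          + (C₁ / (ω : ℂ)) * ((Real.sin (ω * (x - β)) : ℝ) : ℂ)
          + (1 / (ω : ℂ)) * ∫ s in β..x, ((Real.sin (ω * (x - s)) : ℝ) : ℂ) * F s := by
  have hω0 : (ω : ℂ) ≠ 0 := by exact_mod_cast hω.ne'
  set c : ℂ := I * ω with hc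
  have hc2 : c ^ 2 = -((ω : ℂ) ^ 2) := by rw [hc, mul_pow, I_sq]; ring
  -- derivatives of iterated derivatives of w
  have hd : ∀ n : ℕ, n < 4 → ∀ x : ℝ,
      HasDerivAt (iteratedDeriv n w) (iteratedDeriv (n + 1) w x) x := by
    intro n hn x
    rw [iteratedDeriv_succ]
    exact ((hw.differentiable_iteratedDeriv n (by exact_mod_cast hn)) x).hasDerivAt
  -- FTC helper
  have hInt : ∀ f : ℝ → ℂ, Continuous f → ∀ x : ℝ,
      HasDerivAt (fun t => ∫ s in β..t, f s) (f x) x := by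
    intro f hf x
    exact intervalIntegral.integral_hasDerivAt_right (hf.intervalIntegrable _ _)
      (hf.stronglyMeasurable.stronglyMeasurableAtFilter) hf.continuousAt
  -- Euler
  have euler : ∀ θ : ℝ, Complex.exp (I * (θ : ℂ))
      = ((Real.cos θ : ℝ) : ℂ) + ((Real.sin θ : ℝ) : ℂ) * I := by
    intro θ
    rw [mul_comm, Complex.exp_mul_I, ← Complex.ofReal_cos, ← Complex.ofReal_sin]
  -- u = w'' - ω² w and its derivatives
  set u : ℝ → ℂ := fun x => iteratedDeriv 2 w x - (ω : ℂ) ^ 2 * w x with hu_def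
  set u' : ℝ → ℂ := fun x => iteratedDeriv 3 w x - (ω : ℂ) ^ 2 * iteratedDeriv 1 w x with hu'_def
  set u'' : ℝ → ℂ := fun x => iteratedDeriv 4 w x - (ω : ℂ) ^ 2 * iteratedDeriv 2 w x with hu''_def
  have hu : ∀ x : ℝ, HasDerivAt u (u' x) x := by
    intro x
    have h0 : HasDerivAt w (iteratedDeriv 1 w x) x := by
      have := hd 0 (by norm_num) x
      rwa [iteratedDeriv_zero] at this
    exact (hd 2 (by norm_num) x).sub (h0.const_mul _)
  have hu' : ∀ x : ℝ, HasDerivAt u' (u'' x) x := by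
    intro x
    exact (hd 3 (by norm_num) x).sub ((hd 1 (by norm_num) x).const_mul _)
  have hode' : ∀ x ∈ Set.Icc β l, u'' x + (ω : ℂ) ^ 2 * u x = F x := by
    intro x hx
    have h := hode x hx
    simp only [hu''_def, hu_def]
    push_cast at h
    linear_combination h
  -- first order: v = u' + c u
  set v : ℝ → ℂ := fun x => u' x + c * u x with hv_def
  set J : ℝ → ℂ := fun x => ∫ s in β..x, Complex.exp (-(c * ((s - β : ℝ) : ℂ))) * F s with hJ_def
  have hcontJint : Continuous fun s : ℝ => Complex.exp (-(c * ((s - β : ℝ) : ℂ))) * F s := by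
    fun_prop
  have hexp : ∀ (a : ℂ) (x : ℝ), HasDerivAt (fun t : ℝ => Complex.exp (a * ((t - β : ℝ) : ℂ)))
      (a * Complex.exp (a * ((x - β : ℝ) : ℂ))) x := by
    intro a x
    have h1 : HasDerivAt (fun t : ℝ => ((t - β : ℝ) : ℂ)) 1 x := by
      simpa using ((hasDerivAt_id x).sub_const β).ofReal_comp
    simpa [mul_comm] using (h1.const_mul a).cexp
  set Φ : ℝ → ℂ := fun x => Complex.exp (-(c * ((x - β : ℝ) : ℂ))) * v x - J x with hΦ_def
  have hΦ : ∀ x : ℝ, HasDerivAt Φ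
      ((-c) * Complex.exp (-(c * ((x - β : ℝ) : ℂ))) * v x
        + Complex.exp (-(c * ((x - β : ℝ) : ℂ))) * (u'' x + c * u' x)
        - Complex.exp (-(c * ((x - β : ℝ) : ℂ))) * F x) x := by
    intro x
    have he := hexp (-c) x
    simp only [neg_mul] at he
    exact ((he.mul ((hu' x).add ((hu x).const_mul c))).sub (hInt _ hcontJint x)).congr_deriv
      (by simp only [hv_def, Pi.add_apply]; ring)
  have hΦconst : ∀ x ∈ Set.Icc β l, Φ x = Φ β := by
    apply constant_of_has_deriv_right_zero
    · exact fun x _ => (hΦ x).differentiableAt.continuousAt.continuousWithinAt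
    · intro x hx
      have h0 := hΦ x
      have hz : (-c) * Complex.exp (-(c * ((x - β : ℝ) : ℂ))) * v x
          + Complex.exp (-(c * ((x - β : ℝ) : ℂ))) * (u'' x + c * u' x)
          - Complex.exp (-(c * ((x - β : ℝ) : ℂ))) * F x = 0 := by
        have h := hode' x (Set.Ico_subset_Icc_self hx)
        simp only [hv_def]
        linear_combination Complex.exp (-(c * ((x - β : ℝ) : ℂ))) * h
          - Complex.exp (-(c * ((x - β : ℝ) : ℂ))) * u x * hc2
      rw [hz] at h0
      exact h0.hasDerivWithinAt
  have hΦβ : Φ β = C₁ := by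
    have hA : J β = 0 := by simp [hJ_def]
    simp only [hΦ_def, hA, hv_def, hu'_def, hu_def, sub_self, Complex.ofReal_zero, mul_zero,
      neg_zero, Complex.exp_zero, one_mul, sub_zero]
    rw [hC₁, iteratedDeriv_one]
    push_cast [hc]
    ring
  have hvrep : ∀ x ∈ Set.Icc β l, v x = Complex.exp (c * ((x - β : ℝ) : ℂ)) * (C₁ + J x) := by
    intro x hx
    have h := hΦconst x hx
    rw [hΦβ] at h
    have hne : Complex.exp (-(c * ((x - β : ℝ) : ℂ))) ≠ 0 := Complex.exp_ne_zero _
    have hinv : Complex.exp (c * ((x - β : ℝ) : ℂ)) * Complex.exp (-(c * ((x - β : ℝ) : ℂ))) = 1 := by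
      rw [← Complex.exp_add]; simp
    have h2 : Complex.exp (-(c * ((x - β : ℝ) : ℂ))) * v x = C₁ + J x := by
      simp only [hΦ_def] at h; linear_combination h
    calc v x = Complex.exp (c * ((x - β : ℝ) : ℂ)) * (Complex.exp (-(c * ((x - β : ℝ) : ℂ))) * v x) := by
          rw [← mul_assoc, hinv, one_mul]
      _ = Complex.exp (c * ((x - β : ℝ) : ℂ)) * (C₁ + J x) := by rw [h2]
  -- the building-block integrals
  set A : ℝ → ℂ := fun x => ∫ s in β..x, ((Real.cos (ω * s) : ℝ) : ℂ) * F s with hA_def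
  set B : ℝ → ℂ := fun x => ∫ s in β..x, ((Real.sin (ω * s) : ℝ) : ℂ) * F s with hB_def
  have hcontA : Continuous fun s : ℝ => ((Real.cos (ω * s) : ℝ) : ℂ) * F s := by fun_prop
  have hcontB : Continuous fun s : ℝ => ((Real.sin (ω * s) : ℝ) : ℂ) * F s := by fun_prop
  have hJrep : ∀ x : ℝ, J x = Complex.exp (c * (β : ℂ)) * (A x - I * B x) := by
    intro x
    have h1 : ∀ s : ℝ, Complex.exp (-(c * ((s - β : ℝ) : ℂ))) * F s
        = Complex.exp (c * (β : ℂ)) * (((Real.cos (ω * s) : ℝ) : ℂ) * F s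
            - I * (((Real.sin (ω * s) : ℝ) : ℂ) * F s)) := by
      intro s
      have he : Complex.exp (-(c * ((s - β : ℝ) : ℂ)))
          = Complex.exp (c * (β : ℂ)) * Complex.exp (I * ((-(ω * s) : ℝ) : ℂ)) := by
        rw [← Complex.exp_add]; congr 1; push_cast [hc]; ring
      rw [he, euler (-(ω * s))]
      push_cast [Real.cos_neg, Real.sin_neg]
      ring
    simp only [hJ_def, hA_def, hB_def]
    rw [intervalIntegral.integral_congr (g := fun s : ℝ => Complex.exp (c * (β : ℂ)) *
        (((Real.cos (ω * s) : ℝ) : ℂ) * F s - I * (((Real.sin (ω * s) : ℝ) : ℂ) * F s)))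
        (fun s _ => h1 s),
      intervalIntegral.integral_const_mul,
      intervalIntegral.integral_sub (g := fun s => I * (((Real.sin (ω * s) : ℝ) : ℂ) * F s))
        (hcontA.intervalIntegrable _ _)
        ((continuous_const.mul hcontB).intervalIntegrable _ _),
      intervalIntegral.integral_const_mul]
  have hkey2 : ∀ x ∈ Set.Icc β l, v x
      = C₁ * Complex.exp (c * ((x - β : ℝ) : ℂ)) + Complex.exp (c * (x : ℂ)) * (A x - I * B x) := by
    intro x hx
    rw [hvrep x hx, hJrep x]
    have he : Complex.exp (c * ((x - β : ℝ) : ℂ)) * Complex.exp (c * (β : ℂ))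
        = Complex.exp (c * (x : ℂ)) := by
      rw [← Complex.exp_add]; congr 1; push_cast; ring
    linear_combination (A x - I * B x) * he
  -- the candidate solution
  set R : ℝ → ℂ := fun x => C₂ * Complex.exp (-(c * ((x - β : ℝ) : ℂ)))
      + (C₁ / (ω : ℂ)) * ((Real.sin (ω * (x - β)) : ℝ) : ℂ)
      + (1 / (ω : ℂ)) * (((Real.sin (ω * x) : ℝ) : ℂ) * A x
          - ((Real.cos (ω * x) : ℝ) : ℂ) * B x) with hR_def
  set R' : ℝ → ℂ := fun x => -(c * (C₂ * Complex.exp (-(c * ((x - β : ℝ) : ℂ)))))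
      + C₁ * ((Real.cos (ω * (x - β)) : ℝ) : ℂ)
      + (((Real.cos (ω * x) : ℝ) : ℂ) * A x + ((Real.sin (ω * x) : ℝ) : ℂ) * B x) with hR'_def
  have hR : ∀ x : ℝ, HasDerivAt R (R' x) x := by
    intro x
    have p1 : HasDerivAt (fun t : ℝ => C₂ * Complex.exp (-(c * ((t - β : ℝ) : ℂ))))
        (C₂ * ((-c) * Complex.exp (-(c * ((x - β : ℝ) : ℂ))))) x := by
      have := (hexp (-c) x).const_mul C₂
      simpa [neg_mul] using this
    have hlin1 : HasDerivAt (fun t : ℝ => ω * (t - β)) (ω * 1) x :=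
      ((hasDerivAt_id x).sub_const β).const_mul ω
    have hlin2 : HasDerivAt (fun t : ℝ => ω * t) (ω * 1) x :=
      (hasDerivAt_id x).const_mul ω
    have hsin1 : HasDerivAt (fun t : ℝ => ((Real.sin (ω * (t - β)) : ℝ) : ℂ))
        ((Real.cos (ω * (x - β)) * (ω * 1) : ℝ) : ℂ) x :=
      by have := ((Real.hasDerivAt_sin (ω * (x - β))).comp x hlin1).ofReal_comp; exact this
    have hsinx : HasDerivAt (fun t : ℝ => ((Real.sin (ω * t) : ℝ) : ℂ))
        ((Real.cos (ω * x) * (ω * 1) : ℝ) : ℂ) x :=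
      ((Real.hasDerivAt_sin (ω * x)).comp x hlin2).ofReal_comp
    have hcosx : HasDerivAt (fun t : ℝ => ((Real.cos (ω * t) : ℝ) : ℂ))
        ((-Real.sin (ω * x) * (ω * 1) : ℝ) : ℂ) x :=
      ((Real.hasDerivAt_cos (ω * x)).comp x hlin2).ofReal_comp
    have hA' : HasDerivAt A (((Real.cos (ω * x) : ℝ) : ℂ) * F x) x := hInt _ hcontA x
    have hB' : HasDerivAt B (((Real.sin (ω * x) : ℝ) : ℂ) * F x) x := hInt _ hcontB x
    have raw := (p1.add (hsin1.const_mul (C₁ / (ω : ℂ)))).add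
      (((hsinx.mul hA').sub (hcosx.mul hB')).const_mul (1 / (ω : ℂ)))
    refine raw.congr_deriv ?_
    simp only [hR'_def]
    push_cast
    field_simp
    ring
  -- key identity: c R + R' = v on [β,l]
  have hkey : ∀ x ∈ Set.Icc β l, c * R x + R' x = u' x + c * u x := by
    intro x hx
    have h2 := hkey2 x hx
    simp only [hv_def] at h2
    rw [show u' x + c * u x = C₁ * Complex.exp (c * ((x - β : ℝ) : ℂ))
        + Complex.exp (c * (x : ℂ)) * (A x - I * B x) from h2]
    have e1 : Complex.exp (c * ((x - β : ℝ) : ℂ))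
        = ((Real.cos (ω * (x - β)) : ℝ) : ℂ) + ((Real.sin (ω * (x - β)) : ℝ) : ℂ) * I := by
      rw [show c * ((x - β : ℝ) : ℂ) = I * ((ω * (x - β) : ℝ) : ℂ) by push_cast [hc]; ring,
        euler]
    have e2 : Complex.exp (c * (x : ℂ))
        = ((Real.cos (ω * x) : ℝ) : ℂ) + ((Real.sin (ω * x) : ℝ) : ℂ) * I := by
      rw [show c * (x : ℂ) = I * ((ω * x : ℝ) : ℂ) by push_cast [hc]; ring, euler]
    simp only [hR_def, hR'_def]
    rw [e1, e2, hc]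
    set s1 : ℂ := ((Real.sin (ω * (x - β)) : ℝ) : ℂ) with hs1
    set c1 : ℂ := ((Real.cos (ω * (x - β)) : ℝ) : ℂ) with hc1
    set sx : ℂ := ((Real.sin (ω * x) : ℝ) : ℂ) with hsx
    set cx : ℂ := ((Real.cos (ω * x) : ℝ) : ℂ) with hcx
    field_simp
    linear_combination (sx * B x) * Complex.I_sq
  -- Ψ = e^{c(x-β)} (u - R) is constant and vanishes
  set Ψ : ℝ → ℂ := fun x => Complex.exp (c * ((x - β : ℝ) : ℂ)) * (u x - R x) with hΨ_def
  have hΨ : ∀ x : ℝ, HasDerivAt Ψ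
      (c * Complex.exp (c * ((x - β : ℝ) : ℂ)) * (u x - R x)
        + Complex.exp (c * ((x - β : ℝ) : ℂ)) * (u' x - R' x)) x :=
    fun x => (hexp c x).mul ((hu x).sub (hR x))
  have hΨconst : ∀ x ∈ Set.Icc β l, Ψ x = Ψ β := by
    apply constant_of_has_deriv_right_zero
    · exact fun x _ => (hΨ x).differentiableAt.continuousAt.continuousWithinAt
    · intro x hx
      have h0 := hΨ x
      have hz : c * Complex.exp (c * ((x - β : ℝ) : ℂ)) * (u x - R x)
          + Complex.exp (c * ((x - β : ℝ) : ℂ)) * (u' x - R' x) = 0 := by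
        have h := hkey x (Set.Ico_subset_Icc_self hx)
        linear_combination (-Complex.exp (c * ((x - β : ℝ) : ℂ))) * h
      rw [hz] at h0
      exact h0.hasDerivWithinAt
  have hΨβ : Ψ β = 0 := by
    have hAβ : A β = 0 := by simp [hA_def]
    have hBβ : B β = 0 := by simp [hB_def]
    have hRβ : R β = C₂ := by
      simp [hR_def, hAβ, hBβ]
    have huβ : u β = C₂ := by
      simp only [hu_def, hC₂]; push_cast; ring
    simp [hΨ_def, hRβ, huβ]
  have huR : ∀ x ∈ Set.Icc β l, u x = R x := by
    intro x hx
    have h := hΨconst x hx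
    rw [hΨβ] at h
    simp only [hΨ_def] at h
    have := mul_eq_zero.mp h
    rcases this with h' | h'
    · exact absurd h' (Complex.exp_ne_zero _)
    · exact sub_eq_zero.mp h'
  -- splitting the sine integral
  have hsplit : ∀ x : ℝ, (∫ s in β..x, ((Real.sin (ω * (x - s)) : ℝ) : ℂ) * F s)
      = ((Real.sin (ω * x) : ℝ) : ℂ) * A x - ((Real.cos (ω * x) : ℝ) : ℂ) * B x := by
    intro x
    have h1 : ∀ s : ℝ, ((Real.sin (ω * (x - s)) : ℝ) : ℂ) * F s
        = ((Real.sin (ω * x) : ℝ) : ℂ) * (((Real.cos (ω * s) : ℝ) : ℂ) * F s)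
          - ((Real.cos (ω * x) : ℝ) : ℂ) * (((Real.sin (ω * s) : ℝ) : ℂ) * F s) := by
      intro s
      rw [show ω * (x - s) = ω * x - ω * s by ring, Real.sin_sub]
      push_cast
      ring
    simp only [hA_def, hB_def]
    rw [intervalIntegral.integral_congr (g := fun s : ℝ =>
        ((Real.sin (ω * x) : ℝ) : ℂ) * (((Real.cos (ω * s) : ℝ) : ℂ) * F s)
          - ((Real.cos (ω * x) : ℝ) : ℂ) * (((Real.sin (ω * s) : ℝ) : ℂ) * F s))
        (fun s _ => h1 s),
      intervalIntegral.integral_sub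
          (f := fun s => ((Real.sin (ω * x) : ℝ) : ℂ) * (((Real.cos (ω * s) : ℝ) : ℂ) * F s))
          (g := fun s => ((Real.cos (ω * x) : ℝ) : ℂ) * (((Real.sin (ω * s) : ℝ) : ℂ) * F s))
          ((continuous_const.mul hcontA).intervalIntegrable _ _)
        ((continuous_const.mul hcontB).intervalIntegrable _ _),
      intervalIntegral.integral_const_mul, intervalIntegral.integral_const_mul]
  -- conclusion
  intro x hx
  have h := huR x hx
  calc iteratedDeriv 2 w x - ((ω ^ 2 : ℝ) : ℂ) * w x = u x := by
        simp only [hu_def]; push_cast; ring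
    _ = R x := h
    _ = C₂ * Complex.exp (-(c * ((x - β : ℝ) : ℂ)))
          + (C₁ / (ω : ℂ)) * ((Real.sin (ω * (x - β)) : ℝ) : ℂ)
          + (1 / (ω : ℂ)) * ∫ s in β..x, ((Real.sin (ω * (x - s)) : ℝ) : ℂ) * F s := by
        rw [hsplit x]
end

section
/- Let ω > 0 and 0 < α, let F : [0,α] → ℂ be continuous, and let w : [0,α] → ℂ be four times continuously differentiable with w''''(x) − ω⁴ w(x) = F(x) on [0,α] and w(0) = w'(0) = 0. Set C₁' = w'''(α) + iω w''(α) − ω² w'(α) − iω³ w(α) and C₂' = w''(α) − ω² w(α). Then for every x ∈ [0,α], w'(x) − ω w(x) = ( C₂' / ((1−i)ω) ) [ e^{−iω(x−α)} − e^{−ωx} e^{iωα} ] + ( C₁' / (2ω²) ) [ sin(ω(x−α)) − cos(ω(x−α)) + e^{−ωx} ( sin(ωα) + cos(ωα) ) ] + (1/ω) ∫_0^x ∫_α^τ e^{−ω(x−τ)} sin(ω(τ−s)) F(s) ds dτ. -/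
open Complex

lemma ofReal_hasDerivAt' {x : ℝ} : HasDerivAt (fun y:ℝ => ((y:ℝ):ℂ)) 1 x :=
  Complex.ofRealCLM.hasDerivAt

lemma ode1_zero {a b : ℝ} (c : ℂ) (f : ℝ → ℂ)
    (hf : ∀ x ∈ Set.Icc a b, HasDerivAt f (c * f x) x)
    {x₀ : ℝ} (hx₀ : x₀ ∈ Set.Icc a b) (h0 : f x₀ = 0) :
    ∀ x ∈ Set.Icc a b, f x = 0 := by
  set g : ℝ → ℂ := fun x => Complex.exp (-(c*x)) * f x with hgdef
  have hg : ∀ x ∈ Set.Icc a b, HasDerivAt g 0 x := by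
    intro x hx
    have h0' : HasDerivAt (fun y:ℝ => -(c*(y:ℂ))) (-c) x := by
      simpa [Pi.neg_def] using (ofReal_hasDerivAt'.const_mul c).neg
    have h1 : HasDerivAt (fun y:ℝ => Complex.exp (-(c*y))) (Complex.exp (-(c*x)) * (-c)) x :=
      h0'.cexp
    have := h1.mul (hf x hx)
    convert this using 1
    · rfl
    · rfl
    ring
  have hconst : ∀ x ∈ Set.Icc a b, g x = g a :=
    constant_of_has_deriv_right_zero
      (fun x hx => ((hg x hx).continuousAt).continuousWithinAt)
      (fun x hx => ((hg x ⟨hx.1, hx.2.le⟩).hasDerivWithinAt))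
  intro x hx
  have h1 : g x = g a := hconst x hx
  have h2 : g x₀ = g a := hconst x₀ hx₀
  have h3 : g x = 0 := by rw [h1, ← h2, hgdef]; simp [h0]
  rw [hgdef] at h3
  simp only [mul_eq_zero] at h3
  rcases h3 with h | h
  · exact absurd h (Complex.exp_ne_zero _)
  · exact h

lemma primitive_hasDerivAt' {f : ℝ → ℂ} (hf : Continuous f) (a x : ℝ) :
    HasDerivAt (fun u => ∫ s in a..u, f s) (f x) x :=
  intervalIntegral.integral_hasDerivAt_right (hf.intervalIntegrable _ _)
    (hf.stronglyMeasurable.stronglyMeasurableAtFilter) hf.continuousAt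

set_option maxHeartbeats 2000000 in
/-- First-order representation of `w'''' − ω⁴ w = F` on `[0,α]` with clamped data
`w(0) = w'(0) = 0`: for all `x ∈ [0,α]`,
`w'(x) − ω w(x) = (C₂'/((1−i)ω))[e^{−iω(x−α)} − e^{−ωx}e^{iωα}]
  + (C₁'/(2ω²))[sin(ω(x−α)) − cos(ω(x−α)) + e^{−ωx}(sin(ωα) + cos(ωα))]
  + (1/ω)∫₀^x ∫_α^τ e^{−ω(x−τ)} sin(ω(τ−s)) F(s) ds dτ`. -/
theorem representation_first_order_left
    (ω α : ℝ) (hω : 0 < ω) (hα : 0 < α)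
    (F : ℝ → ℂ) (hF : Continuous F)
    (w : ℝ → ℂ) (hw : ContDiff ℝ 4 w)
    (hode : ∀ x ∈ Set.Icc 0 α, iteratedDeriv 4 w x - ((ω^4 : ℝ) : ℂ) * w x = F x)
    (hw0 : w 0 = 0) (hw0' : deriv w 0 = 0)
    (C₁' C₂' : ℂ)
    (hC₁' : C₁' = iteratedDeriv 3 w α + I * ω * iteratedDeriv 2 w α
        - (ω^2 : ℝ) * deriv w α - I * (ω^3 : ℝ) * w α)
    (hC₂' : C₂' = iteratedDeriv 2 w α - (ω^2 : ℝ) * w α) :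
    ∀ x ∈ Set.Icc (0:ℝ) α,
      deriv w x - (ω : ℂ) * w x
        = (C₂' / ((1 - I) * ω))
            * (Complex.exp (-(I * ω * ((x - α : ℝ) : ℂ)))
                - ((Real.exp (-(ω * x)) : ℝ) : ℂ) * Complex.exp (I * ω * (α : ℂ)))
          + (C₁' / (2 * (ω^2 : ℝ)))
            * (((Real.sin (ω * (x - α)) : ℝ) : ℂ) - ((Real.cos (ω * (x - α)) : ℝ) : ℂ)
                + ((Real.exp (-(ω * x)) : ℝ) : ℂ)
                  * (((Real.sin (ω * α) : ℝ) : ℂ) + ((Real.cos (ω * α) : ℝ) : ℂ)))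
          + (1 / (ω : ℂ)) * ∫ τ in (0:ℝ)..x, ∫ s in α..τ,
              ((Real.exp (-(ω * (x - τ))) : ℝ) : ℂ)
                * ((Real.sin (ω * (τ - s)) : ℝ) : ℂ) * F s := by
  have hω' : (ω:ℂ) ≠ 0 := by exact_mod_cast hω.ne'
  have h1I : (1 - I : ℂ) ≠ 0 := by
    intro h
    have := congrArg Complex.im h
    simp at this
  -- higher derivatives of w
  have hwd3 : ContDiff ℝ 3 (deriv w) := by
    have := (contDiff_succ_iff_deriv.mp (show ContDiff ℝ (3+1) w by exact_mod_cast hw)).2.2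
    exact_mod_cast this
  have hwd2 : ContDiff ℝ 2 (deriv (deriv w)) := by
    have := (contDiff_succ_iff_deriv.mp
      (show ContDiff ℝ (2+1) (deriv w) by exact_mod_cast hwd3)).2.2
    exact_mod_cast this
  have hwd1 : ContDiff ℝ 1 (deriv (deriv (deriv w))) := by
    have := (contDiff_succ_iff_deriv.mp
      (show ContDiff ℝ (1+1) (deriv (deriv w)) by exact_mod_cast hwd2)).2.2
    exact_mod_cast this
  set w1 := deriv w with hw1def
  set w2 := deriv w1 with hw2def
  set w3 := deriv w2 with hw3def
  set w4 := deriv w3 with hw4def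
  have hD1 : ∀ x, HasDerivAt w (w1 x) x := fun x =>
    ((hw.differentiable (by norm_num)) x).hasDerivAt
  have hD2 : ∀ x, HasDerivAt w1 (w2 x) x := fun x =>
    ((hwd3.differentiable (by norm_num)) x).hasDerivAt
  have hD3 : ∀ x, HasDerivAt w2 (w3 x) x := fun x =>
    ((hwd2.differentiable (by norm_num)) x).hasDerivAt
  have hD4 : ∀ x, HasDerivAt w3 (w4 x) x := fun x =>
    ((hwd1.differentiable (by norm_num)) x).hasDerivAt
  have hi2 : iteratedDeriv 2 w = w2 := by
    rw [show (2:ℕ) = 1 + 1 from rfl, iteratedDeriv_succ, iteratedDeriv_one]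
  have hi3 : iteratedDeriv 3 w = w3 := by
    rw [show (3:ℕ) = 2 + 1 from rfl, iteratedDeriv_succ, hi2]
  have hi4 : iteratedDeriv 4 w = w4 := by
    rw [show (4:ℕ) = 3 + 1 from rfl, iteratedDeriv_succ, hi3]
  rw [hi2] at hC₂'
  rw [hi2, hi3] at hC₁'
  rw [hi4] at hode
  -- primitives
  have hcF : Continuous fun s => ((Real.cos (ω*s) : ℝ):ℂ) * F s := by fun_prop
  have hsF : Continuous fun s => ((Real.sin (ω*s) : ℝ):ℂ) * F s := by fun_prop
  set A : ℝ → ℂ := fun τ => ∫ s in α..τ, ((Real.cos (ω*s) : ℝ):ℂ) * F s with hAdef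
  set B : ℝ → ℂ := fun τ => ∫ s in α..τ, ((Real.sin (ω*s) : ℝ):ℂ) * F s with hBdef
  have hA : ∀ τ, HasDerivAt A (((Real.cos (ω*τ):ℝ):ℂ) * F τ) τ := fun τ =>
    primitive_hasDerivAt' hcF α τ
  have hB : ∀ τ, HasDerivAt B (((Real.sin (ω*τ):ℝ):ℂ) * F τ) τ := fun τ =>
    primitive_hasDerivAt' hsF α τ
  have hAc : Continuous A := by
    rw [continuous_iff_continuousAt]; exact fun x => (hA x).continuousAt
  have hBc : Continuous B := by
    rw [continuous_iff_continuousAt]; exact fun x => (hB x).continuousAt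
  have hAα : A α = 0 := intervalIntegral.integral_same
  have hBα : B α = 0 := intervalIntegral.integral_same
  -- elementary derivative helpers
  have hexp : ∀ x : ℝ, HasDerivAt (fun t:ℝ => ((Real.exp (-(ω*t)) : ℝ):ℂ))
      (-(ω:ℂ) * ((Real.exp (-(ω*x)) : ℝ):ℂ)) x := by
    intro x
    have h1 : HasDerivAt (fun t:ℝ => -(ω*t)) (-ω) x := by
      simpa [Pi.neg_def] using ((hasDerivAt_id x).const_mul ω).neg
    have h2 := (Real.hasDerivAt_exp (-(ω*x))).comp x h1
    have h3 := h2.ofReal_comp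
    convert h3 using 1
    · rfl
    · push_cast; ring
  have hsin0 : ∀ x : ℝ, HasDerivAt (fun t:ℝ => ((Real.sin (ω*t) : ℝ):ℂ))
      ((ω:ℂ) * ((Real.cos (ω*x) : ℝ):ℂ)) x := by
    intro x
    have h1 : HasDerivAt (fun t:ℝ => ω*t) ω x := by
      simpa using (hasDerivAt_id x).const_mul ω
    have h2 := ((Real.hasDerivAt_sin (ω*x)).comp x h1).ofReal_comp
    convert h2 using 1
    · rfl
    push_cast; ring
  have hcos0 : ∀ x : ℝ, HasDerivAt (fun t:ℝ => ((Real.cos (ω*t) : ℝ):ℂ))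
      (-((ω:ℂ) * ((Real.sin (ω*x) : ℝ):ℂ))) x := by
    intro x
    have h1 : HasDerivAt (fun t:ℝ => ω*t) ω x := by
      simpa using (hasDerivAt_id x).const_mul ω
    have h2 := ((Real.hasDerivAt_cos (ω*x)).comp x h1).ofReal_comp
    convert h2 using 1
    · rfl
    push_cast; ring
  have hsina : ∀ x : ℝ, HasDerivAt (fun t:ℝ => ((Real.sin (ω*(t-α)) : ℝ):ℂ))
      ((ω:ℂ) * ((Real.cos (ω*(x-α)) : ℝ):ℂ)) x := by
    intro x
    have h1 : HasDerivAt (fun t:ℝ => ω*(t-α)) ω x := by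
      simpa using ((hasDerivAt_id x).sub_const α).const_mul ω
    have h2 := ((Real.hasDerivAt_sin (ω*(x-α))).comp x h1).ofReal_comp
    convert h2 using 1
    · rfl
    push_cast; ring
  have hcosa : ∀ x : ℝ, HasDerivAt (fun t:ℝ => ((Real.cos (ω*(t-α)) : ℝ):ℂ))
      (-((ω:ℂ) * ((Real.sin (ω*(x-α)) : ℝ):ℂ))) x := by
    intro x
    have h1 : HasDerivAt (fun t:ℝ => ω*(t-α)) ω x := by
      simpa using ((hasDerivAt_id x).sub_const α).const_mul ω
    have h2 := ((Real.hasDerivAt_cos (ω*(x-α))).comp x h1).ofReal_comp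
    convert h2 using 1
    · rfl
    push_cast; ring
  have hE : ∀ x : ℝ, HasDerivAt (fun t:ℝ => Complex.exp (-(I * ω * ((t - α : ℝ) : ℂ))))
      (-(I*(ω:ℂ)) * Complex.exp (-(I * ω * ((x - α : ℝ) : ℂ)))) x := by
    intro x
    have hi : HasDerivAt (fun z:ℂ => -(I*(ω:ℂ)*(z-(α:ℂ)))) (-(I*(ω:ℂ))) ((x:ℝ):ℂ) := by
      simpa [Pi.neg_def] using (((hasDerivAt_id ((x:ℝ):ℂ)).sub_const ((α:ℝ):ℂ)).const_mul (I*(ω:ℂ))).neg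
    have hz : HasDerivAt (fun z:ℂ => Complex.exp (-(I*(ω:ℂ)*(z-(α:ℂ)))))
        (-(I*(ω:ℂ)) * Complex.exp (-(I*(ω:ℂ)*(((x:ℝ):ℂ)-(α:ℂ))))) ((x:ℝ):ℂ) := by
      simpa [mul_comm] using hi.cexp
    have := hz.comp_ofReal
    simp only [Complex.ofReal_sub]
    exact this
  -- second order quantities
  set v : ℝ → ℂ := fun x => w2 x - (ω:ℂ)^2 * w x with hvdef
  set v1 : ℝ → ℂ := fun x => w3 x - (ω:ℂ)^2 * w1 x with hv1def
  have hv : ∀ x, HasDerivAt v (v1 x) x := fun x =>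
    (hD3 x).sub ((hD1 x).const_mul ((ω:ℂ)^2))
  have hv1 : ∀ x ∈ Set.Icc (0:ℝ) α, HasDerivAt v1 (F x - (ω:ℂ)^2 * v x) x := by
    intro x hx
    have h1 := (hD4 x).sub ((hD2 x).const_mul ((ω:ℂ)^2))
    have h2 : w4 x - (ω:ℂ)^2 * w2 x = F x - (ω:ℂ)^2 * v x := by
      have h3 := hode x hx
      push_cast at h3 ⊢
      simp only [hvdef]
      linear_combination h3
    rwa [h2] at h1
  have hvα : v α = C₂' := by rw [hC₂']; push_cast; ring
  have hv1α : v1 α = C₁' - I*(ω:ℂ)*C₂' := by rw [hC₁', hC₂']; push_cast; ring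
  -- the explicit solution G of v'' + ω² v = F with data at α
  set G : ℝ → ℂ := fun τ => Complex.exp (-(I * ω * ((τ - α : ℝ) : ℂ))) * C₂'
      + (C₁'/(ω:ℂ)) * ((Real.sin (ω*(τ-α)) : ℝ):ℂ)
      + (1/(ω:ℂ)) * (((Real.sin (ω*τ) : ℝ):ℂ) * A τ - ((Real.cos (ω*τ) : ℝ):ℂ) * B τ)
    with hGdef
  set G1 : ℝ → ℂ := fun τ => (-(I*(ω:ℂ))) * (Complex.exp (-(I * ω * ((τ - α : ℝ) : ℂ))) * C₂')
      + C₁' * ((Real.cos (ω*(τ-α)) : ℝ):ℂ)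
      + (((Real.cos (ω*τ) : ℝ):ℂ) * A τ + ((Real.sin (ω*τ) : ℝ):ℂ) * B τ)
    with hG1def
  have hG : ∀ τ, HasDerivAt G (G1 τ) τ := by
    intro τ
    have p1 := (hE τ).mul_const C₂'
    have p2 := (hsina τ).const_mul (C₁'/(ω:ℂ))
    have p3 := (((hsin0 τ).mul (hA τ)).sub ((hcos0 τ).mul (hB τ))).const_mul (1/(ω:ℂ))
    have h := (p1.add p2).add p3
    convert h using 1
    · rfl
    · rfl
    simp only [hG1def]
    field_simp
    ring
  have hG1 : ∀ τ, HasDerivAt G1 (F τ - (ω:ℂ)^2 * G τ) τ := by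
    intro τ
    have p1 := ((hE τ).mul_const C₂').const_mul (-(I*(ω:ℂ)))
    have p2 := (hcosa τ).const_mul C₁'
    have p3 := ((hcos0 τ).mul (hA τ)).add ((hsin0 τ).mul (hB τ))
    have h := (p1.add p2).add p3
    convert h using 1
    · rfl
    · rfl
    have hpy : ((Real.cos (ω*τ) : ℝ):ℂ)^2 + ((Real.sin (ω*τ) : ℝ):ℂ)^2 = 1 := by
      have hre : Real.cos (ω*τ)^2 + Real.sin (ω*τ)^2 = 1 := by
        rw [add_comm]; exact Real.sin_sq_add_cos_sq _
      exact_mod_cast hre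
    simp only [hGdef]
    linear_combination (-(F τ)) * hpy
      + (-((ω:ℂ)^2) * Complex.exp (-(I * ω * ((τ - α : ℝ) : ℂ))) * C₂') * Complex.I_sq
      + (-(ω:ℂ) * (C₁' * ((Real.sin (ω*(τ-α)) : ℝ):ℂ)
          + (((Real.sin (ω*τ) : ℝ):ℂ) * A τ - ((Real.cos (ω*τ) : ℝ):ℂ) * B τ))) * mul_inv_cancel₀ hω'
  have hGα : G α = C₂' := by
    simp only [hGdef]
    rw [hAα, hBα]
    simp
  have hG1α : G1 α = C₁' - I*(ω:ℂ)*C₂' := by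
    simp only [hG1def]
    rw [hAα, hBα]
    simp
    ring
  have hαmem : α ∈ Set.Icc (0:ℝ) α := ⟨hα.le, le_refl α⟩
  -- uniqueness: v = G on [0, α]
  set p : ℝ → ℂ := fun τ => (v1 τ - G1 τ) + I*(ω:ℂ)*(v τ - G τ) with hpdef
  have hp : ∀ τ ∈ Set.Icc (0:ℝ) α, HasDerivAt p (I*(ω:ℂ) * p τ) τ := by
    intro τ hτ
    have h := ((hv1 τ hτ).sub (hG1 τ)).add (((hv τ).sub (hG τ)).const_mul (I*(ω:ℂ)))
    convert h using 1
    · rfl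
    · rfl
    simp only [hpdef]
    linear_combination (((ω:ℂ)^2) * (v τ - G τ)) * Complex.I_sq
  have hpα : p α = 0 := by
    simp only [hpdef]
    rw [hvα, hv1α, hGα, hG1α]
    ring
  have hp0 : ∀ τ ∈ Set.Icc (0:ℝ) α, p τ = 0 := ode1_zero (I*(ω:ℂ)) p hp hαmem hpα
  set d : ℝ → ℂ := fun τ => v τ - G τ with hddef
  have hd : ∀ τ ∈ Set.Icc (0:ℝ) α, HasDerivAt d (-(I*(ω:ℂ)) * d τ) τ := by
    intro τ hτ
    have h := (hv τ).sub (hG τ)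
    have h2 : v1 τ - G1 τ = -(I*(ω:ℂ)) * d τ := by
      have := hp0 τ hτ
      simp only [hpdef] at this
      simp only [hddef]
      linear_combination this
    rwa [h2] at h
  have hdα : d α = 0 := by simp only [hddef]; rw [hvα, hGα]; ring
  have hd0 : ∀ τ ∈ Set.Icc (0:ℝ) α, d τ = 0 := ode1_zero (-(I*(ω:ℂ))) d hd hαmem hdα
  have hvG : ∀ τ ∈ Set.Icc (0:ℝ) α, v τ = G τ := by
    intro τ hτ
    have := hd0 τ hτ
    simp only [hddef] at this
    exact sub_eq_zero.mp this
  -- the kernel primitive K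
  have c1 : Continuous fun τ:ℝ => ((Real.exp (ω*τ) : ℝ):ℂ) := by fun_prop
  have c2 : Continuous fun τ:ℝ => ((Real.sin (ω*τ) : ℝ):ℂ) := by fun_prop
  have c3 : Continuous fun τ:ℝ => ((Real.cos (ω*τ) : ℝ):ℂ) := by fun_prop
  have hKc : Continuous fun τ:ℝ => ((Real.exp (ω*τ) : ℝ):ℂ)
      * (((Real.sin (ω*τ) : ℝ):ℂ) * A τ - ((Real.cos (ω*τ) : ℝ):ℂ) * B τ) :=
    c1.mul ((c2.mul hAc).sub (c3.mul hBc))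
  set K : ℝ → ℂ := fun x => ∫ τ in (0:ℝ)..x, ((Real.exp (ω*τ) : ℝ):ℂ)
      * (((Real.sin (ω*τ) : ℝ):ℂ) * A τ - ((Real.cos (ω*τ) : ℝ):ℂ) * B τ) with hKdef
  have hK : ∀ x, HasDerivAt K (((Real.exp (ω*x) : ℝ):ℂ)
      * (((Real.sin (ω*x) : ℝ):ℂ) * A x - ((Real.cos (ω*x) : ℝ):ℂ) * B x)) x := fun x =>
    primitive_hasDerivAt' hKc 0 x
  have hK0 : K 0 = 0 := intervalIntegral.integral_same
  -- the explicit right-hand side R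
  set R : ℝ → ℂ := fun x =>
      (C₂' / ((1 - I) * ω))
            * (Complex.exp (-(I * ω * ((x - α : ℝ) : ℂ)))
                - ((Real.exp (-(ω * x)) : ℝ) : ℂ) * Complex.exp (I * ω * (α : ℂ)))
          + (C₁' / (2 * (ω^2 : ℝ)))
            * (((Real.sin (ω * (x - α)) : ℝ) : ℂ) - ((Real.cos (ω * (x - α)) : ℝ) : ℂ)
                + ((Real.exp (-(ω * x)) : ℝ) : ℂ)
                  * (((Real.sin (ω * α) : ℝ) : ℂ) + ((Real.cos (ω * α) : ℝ) : ℂ)))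
          + (1 / (ω : ℂ)) * (((Real.exp (-(ω * x)) : ℝ) : ℂ) * K x) with hRdef
  have hR : ∀ x, HasDerivAt R (G x - (ω:ℂ) * R x) x := by
    intro x
    have p1 := ((hE x).sub ((hexp x).mul_const (Complex.exp (I * ω * (α:ℂ))))).const_mul
      (C₂' / ((1 - I) * ω))
    have p2 := (((hsina x).sub (hcosa x)).add ((hexp x).mul_const
      (((Real.sin (ω*α) : ℝ):ℂ) + ((Real.cos (ω*α) : ℝ):ℂ)))).const_mul
      (C₁' / (2 * ((ω^2 : ℝ):ℂ)))
    have p3 := ((hexp x).mul (hK x)).const_mul (1/(ω:ℂ))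
    have h := (p1.add p2).add p3
    have hxe : ((Real.exp (ω*x) : ℝ):ℂ) = ((Real.exp (-(ω*x)) : ℝ):ℂ)⁻¹ := by
      have : Real.exp (ω*x) = (Real.exp (-(ω*x)))⁻¹ := by rw [Real.exp_neg, inv_inv]
      rw [this]; push_cast; ring
    have hne : ((Real.exp (-(ω*x)) : ℝ):ℂ) ≠ 0 := by
      exact_mod_cast Real.exp_ne_zero _
    rw [hxe] at h
    have id1 : ∀ a b c : ℂ, (C₂' / ((1 - I) * (ω:ℂ))) * (-(I*(ω:ℂ)) * a - (-(ω:ℂ) * b) * c)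
        + (ω:ℂ) * ((C₂' / ((1 - I) * (ω:ℂ))) * (a - b * c)) = a * C₂' := by
      intro a b c
      field_simp [hω', h1I]
      ring
    have id2 : ∀ s c e sa ca : ℂ,
        (C₁' / (2 * ((ω^2:ℝ):ℂ))) * (((ω:ℂ)*c - -((ω:ℂ)*s)) + (-(ω:ℂ)*e)*(sa+ca))
          + (ω:ℂ) * ((C₁' / (2 * ((ω^2:ℝ):ℂ))) * (s - c + e*(sa+ca))) = C₁'/(ω:ℂ) * s := by
      intro s c e sa ca
      push_cast
      field_simp [hω']
      ring
    have id3 : ∀ k m : ℂ,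
        (1/(ω:ℂ)) * ((-(ω:ℂ) * ((Real.exp (-(ω*x)) : ℝ):ℂ)) * k
            + ((Real.exp (-(ω*x)) : ℝ):ℂ) * (((Real.exp (-(ω*x)) : ℝ):ℂ)⁻¹ * m))
          + (ω:ℂ) * ((1/(ω:ℂ)) * (((Real.exp (-(ω*x)) : ℝ):ℂ) * k)) = (1/(ω:ℂ)) * m := by
      intro k m
      field_simp
      ring
    have heq : G x - (ω:ℂ) * R x
        = (C₂' / ((1 - I) * (ω:ℂ))) * (-(I*(ω:ℂ)) * Complex.exp (-(I * ω * ((x - α : ℝ) : ℂ)))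
              - (-(ω:ℂ) * ((Real.exp (-(ω*x)) : ℝ):ℂ)) * Complex.exp (I * ω * (α:ℂ)))
          + (C₁' / (2 * ((ω^2:ℝ):ℂ))) * (((ω:ℂ)*((Real.cos (ω*(x-α)) : ℝ):ℂ)
                - -((ω:ℂ)*((Real.sin (ω*(x-α)) : ℝ):ℂ)))
              + (-(ω:ℂ)*((Real.exp (-(ω*x)) : ℝ):ℂ))
                * (((Real.sin (ω*α) : ℝ):ℂ)+((Real.cos (ω*α) : ℝ):ℂ)))
          + (1/(ω:ℂ)) * ((-(ω:ℂ) * ((Real.exp (-(ω*x)) : ℝ):ℂ)) * K x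
              + ((Real.exp (-(ω*x)) : ℝ):ℂ) * (((Real.exp (-(ω*x)) : ℝ):ℂ)⁻¹
                * (((Real.sin (ω*x) : ℝ):ℂ) * A x - ((Real.cos (ω*x) : ℝ):ℂ) * B x))) := by
      simp only [hGdef, hRdef]
      linear_combination (-1 : ℂ) * id1 (Complex.exp (-(I * ω * ((x - α : ℝ) : ℂ))))
            ((Real.exp (-(ω*x)) : ℝ):ℂ) (Complex.exp (I * ω * (α:ℂ)))
        + (-1 : ℂ) * id2 ((Real.sin (ω*(x-α)) : ℝ):ℂ) ((Real.cos (ω*(x-α)) : ℝ):ℂ)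
            ((Real.exp (-(ω*x)) : ℝ):ℂ) ((Real.sin (ω*α) : ℝ):ℂ) ((Real.cos (ω*α) : ℝ):ℂ)
        + (-1 : ℂ) * id3 (K x) (((Real.sin (ω*x) : ℝ):ℂ) * A x - ((Real.cos (ω*x) : ℝ):ℂ) * B x)
    rw [heq]
    exact h
  have hR0 : R 0 = 0 := by
    have h1 : Complex.exp (-(I * ω * ((0 - α : ℝ):ℂ))) = Complex.exp (I * ω * (α:ℂ)) := by
      congr 1; push_cast; ring
    have h3 : Real.sin (ω*(0-α)) = -Real.sin (ω*α) := by
      rw [show ω*(0-α) = -(ω*α) by ring, Real.sin_neg]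
    have h4 : Real.cos (ω*(0-α)) = Real.cos (ω*α) := by
      rw [show ω*(0-α) = -(ω*α) by ring, Real.cos_neg]
    simp only [hRdef]
    rw [hK0, h1, h3, h4]
    push_cast
    simp
  -- the first order quantity Δ
  set Δ : ℝ → ℂ := fun x => (w1 x - (ω:ℂ) * w x) - R x with hΔdef
  have hΔ : ∀ x ∈ Set.Icc (0:ℝ) α, HasDerivAt Δ (-(ω:ℂ) * Δ x) x := by
    intro x hx
    have h := ((hD2 x).sub ((hD1 x).const_mul (ω:ℂ))).sub (hR x)
    have hG' := hvG x hx
    simp only [hvdef] at hG'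
    have h2 : (w2 x - (ω:ℂ) * w1 x) - (G x - (ω:ℂ) * R x) = -(ω:ℂ) * Δ x := by
      simp only [hΔdef]
      linear_combination hG'
    rwa [h2] at h
  have h0mem : (0:ℝ) ∈ Set.Icc (0:ℝ) α := ⟨le_refl _, hα.le⟩
  have hΔ0 : Δ 0 = 0 := by
    simp only [hΔdef]
    rw [hw0, hw0', hR0]
    ring
  have hΔz := ode1_zero (-(ω:ℂ)) Δ hΔ h0mem hΔ0
  -- final assembly
  intro x hx
  have hqR : w1 x - (ω:ℂ) * w x = R x := by
    have := hΔz x hx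
    simp only [hΔdef] at this
    exact sub_eq_zero.mp this
  have hinner : ∀ τ:ℝ, (∫ s in α..τ, ((Real.exp (-(ω*(x-τ))) : ℝ):ℂ)
        * ((Real.sin (ω*(τ-s)) : ℝ):ℂ) * F s)
      = ((Real.exp (-(ω*x)) : ℝ):ℂ) * (((Real.exp (ω*τ) : ℝ):ℂ)
        * (((Real.sin (ω*τ) : ℝ):ℂ) * A τ - ((Real.cos (ω*τ) : ℝ):ℂ) * B τ)) := by
    intro τ
    have e1 : (∫ s in α..τ, ((Real.exp (-(ω*(x-τ))) : ℝ):ℂ)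
          * ((Real.sin (ω*(τ-s)) : ℝ):ℂ) * F s)
        = ∫ s in α..τ,
            ((((Real.exp (-(ω*(x-τ))) : ℝ):ℂ) * ((Real.sin (ω*τ) : ℝ):ℂ))
                * (((Real.cos (ω*s) : ℝ):ℂ) * F s)
              - (((Real.exp (-(ω*(x-τ))) : ℝ):ℂ) * ((Real.cos (ω*τ) : ℝ):ℂ))
                * (((Real.sin (ω*s) : ℝ):ℂ) * F s)) := by
      apply intervalIntegral.integral_congr
      intro s _
      simp only [mul_sub, Real.sin_sub]
      push_cast
      ring
    rw [e1, intervalIntegral.integral_sub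
        ((hcF.intervalIntegrable _ _).const_mul _)
        ((hsF.intervalIntegrable _ _).const_mul _),
      intervalIntegral.integral_const_mul, intervalIntegral.integral_const_mul]
    have e3 : (∫ s in α..τ, ((Real.cos (ω*s) : ℝ):ℂ) * F s) = A τ := by simp [hAdef]
    have e4 : (∫ s in α..τ, ((Real.sin (ω*s) : ℝ):ℂ) * F s) = B τ := by simp [hBdef]
    rw [e3, e4]
    have e2 : ((Real.exp (-(ω*(x-τ))) : ℝ):ℂ)
        = ((Real.exp (-(ω*x)) : ℝ):ℂ) * ((Real.exp (ω*τ) : ℝ):ℂ) := by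
      rw [show (-(ω*(x-τ))) = -(ω*x) + ω*τ by ring, Real.exp_add]
      push_cast
      ring
    rw [e2]
    ring
  have hint : (∫ τ in (0:ℝ)..x, ∫ s in α..τ, ((Real.exp (-(ω*(x-τ))) : ℝ):ℂ)
        * ((Real.sin (ω*(τ-s)) : ℝ):ℂ) * F s)
      = ((Real.exp (-(ω*x)) : ℝ):ℂ) * K x := by
    rw [intervalIntegral.integral_congr (fun τ _ => hinner τ),
      intervalIntegral.integral_const_mul]
  rw [hint]
  calc w1 x - (ω:ℂ) * w x = R x := hqR
    _ = _ := by rw [hRdef]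
end

section
/- Let a < b be real numbers and let f : [a,b] → ℂ be continuously differentiable. Then |f(a)|² ≤ (1/(b−a)) ∫_a^b |f(x)|² dx + 2 ( ∫_a^b |f(x)|² dx )^{1/2} ( ∫_a^b |f'(x)|² dx )^{1/2}. -/
open MeasureTheory intervalIntegral Set

/-- Endpoint trace (interpolation) inequality on an interval: for `f ∈ C¹([a,b])`,
`|f(a)|² ≤ (1/(b−a)) ∫_a^b |f|² + 2 (∫_a^b |f|²)^{1/2} (∫_a^b |f'|²)^{1/2}`. -/
theorem endpoint_trace_inequality
    (a b : ℝ) (hab : a < b) (f : ℝ → ℂ) (hf : ContDiff ℝ 1 f) :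
    ‖f a‖^2
      ≤ (1/(b - a)) * ∫ x in a..b, ‖f x‖^2
        + 2 * (∫ x in a..b, ‖f x‖^2) ^ ((1:ℝ)/2)
            * (∫ x in a..b, ‖deriv f x‖^2) ^ ((1:ℝ)/2) := by
  have hfc : Continuous f := hf.continuous
  have hf'c : Continuous (deriv f) := hf.continuous_deriv le_rfl
  have hfd : Differentiable ℝ f := hf.differentiable one_ne_zero
  set g : ℝ → ℝ := fun x => ‖f x‖^2 with hg_def
  set g' : ℝ → ℝ := fun x => 2 * (inner ℝ (f x) (deriv f x) : ℝ) with hg'_def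
  have hgderiv : ∀ x, HasDerivAt g (g' x) x := by
    intro x
    have h := (hfd x).hasDerivAt
    have hin := h.inner ℝ h
    have heq : g = fun x => (inner ℝ (f x) (f x) : ℝ) :=
      funext fun x => (real_inner_self_eq_norm_sq _).symm
    have h2 : (inner ℝ (f x) (deriv f x) : ℝ) + inner ℝ (deriv f x) (f x) = g' x := by
      have hc := real_inner_comm (deriv f x) (f x)
      simp only [hg'_def]; linarith
    rw [heq, ← h2]; exact hin
  have hg'c : Continuous g' := by
    apply Continuous.mul continuous_const
    exact Continuous.inner hfc hf'c
  -- pointwise bound on |g'|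
  have hg'bound : ∀ x, |g' x| ≤ 2 * (‖f x‖ * ‖deriv f x‖) := by
    intro x
    rw [hg'_def, abs_mul, abs_two]
    have := abs_real_inner_le_norm (f x) (deriv f x)
    nlinarith
  -- the integral of |g'| on [a,b] is bounded
  set K : ℝ := ∫ x in a..b, 2 * (‖f x‖ * ‖deriv f x‖) with hK_def
  have hint2 : IntervalIntegrable (fun x => 2 * (‖f x‖ * ‖deriv f x‖)) volume a b :=
    (Continuous.mul continuous_const (hfc.norm.mul hf'c.norm)).intervalIntegrable a b
  -- pointwise: g a ≤ g y + K for y in [a,b]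
  have key : ∀ y ∈ Icc a b, g a ≤ g y + K := by
    intro y hy
    have hftc : ∫ x in a..y, g' x = g y - g a :=
      integral_eq_sub_of_hasDerivAt (fun x _ => hgderiv x) (hg'c.intervalIntegrable a y)
    have h1 : |∫ x in a..y, g' x| ≤ ∫ x in a..y, |g' x| := by
      have := intervalIntegral.abs_integral_le_integral_abs (μ := volume) (f := g') (a := a) (b := y) hy.1
      exact this
    have h2 : ∫ x in a..y, |g' x| ≤ K := by
      rw [hK_def]
      have hmono : ∫ x in a..y, |g' x| ≤ ∫ x in a..b, |g' x| := by
        apply intervalIntegral.integral_mono_interval le_rfl hy.1 hy.2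
        · filter_upwards with x using abs_nonneg _
        · exact hg'c.abs.intervalIntegrable a b
      refine hmono.trans ?_
      apply intervalIntegral.integral_mono_on hab.le
        (hg'c.abs.intervalIntegrable a b) hint2
      intro x _
      exact hg'bound x
    have := abs_le.mp (h1.trans h2) |>.1
    linarith [hftc ▸ this]
  -- integrate the pointwise bound in y over [a,b]
  have hint_g : IntervalIntegrable (fun x => ‖f x‖^2) volume a b :=
    (hfc.norm.pow 2).intervalIntegrable a b
  have havg : (b - a) * g a ≤ (∫ y in a..b, g y) + (b - a) * K := by
    have h := intervalIntegral.integral_mono_on hab.le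
      (_root_.intervalIntegrable_const (c := g a))
      (hint_g.add (_root_.intervalIntegrable_const (c := K)))
      (fun y hy => key y hy)
    simp only [intervalIntegral.integral_const, smul_eq_mul] at h
    rw [intervalIntegral.integral_add hint_g (_root_.intervalIntegrable_const (c := K))] at h
    simp only [intervalIntegral.integral_const, smul_eq_mul] at h
    linarith
  have hba : (0:ℝ) < b - a := by linarith
  have hmain : g a ≤ (1/(b - a)) * (∫ y in a..b, g y) + K := by
    have h1 : g a ≤ ((∫ y in a..b, g y) + (b - a) * K) / (b - a) := by
      rw [le_div_iff₀ hba]; linarith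
    refine h1.trans_eq ?_
    field_simp
  -- Cauchy–Schwarz for K
  have hKbound : K ≤ 2 * (∫ x in a..b, ‖f x‖^2) ^ ((1:ℝ)/2)
      * (∫ x in a..b, ‖deriv f x‖^2) ^ ((1:ℝ)/2) := by
    have hconj : Real.HolderConjugate 2 2 := by constructor <;> norm_num
    set μ : Measure ℝ := volume.restrict (Set.Ioc a b) with hμ
    haveI : IsFiniteMeasure μ := by
      constructor
      rw [hμ, Measure.restrict_apply_univ]
      exact (measure_Ioc_lt_top)
    have hmem : ∀ (h : ℝ → ℂ), Continuous h → MemLp h (ENNReal.ofReal 2) μ := by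
      intro h hc
      obtain ⟨C, hC⟩ : ∃ C, ∀ x ∈ Set.Icc a b, ‖h x‖ ≤ C :=
        IsCompact.exists_bound_of_continuousOn isCompact_Icc hc.continuousOn
      apply MemLp.of_bound hc.aestronglyMeasurable C
      rw [hμ]
      filter_upwards [ae_restrict_mem measurableSet_Ioc] with x hx
      exact hC x (Set.Ioc_subset_Icc_self hx)
    have hH := integral_mul_norm_le_Lp_mul_Lq (μ := μ) hconj
      (hmem f hfc) (hmem (deriv f) hf'c)
    have e1 : ∫ x in a..b, 2 * (‖f x‖ * ‖deriv f x‖)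
        = 2 * ∫ x, ‖f x‖ * ‖deriv f x‖ ∂μ := by
      rw [intervalIntegral.integral_of_le hab.le, ← MeasureTheory.integral_const_mul]
    have e2 : (∫ x in a..b, ‖f x‖^2) = ∫ x, ‖f x‖ ^ (2:ℝ) ∂μ := by
      rw [intervalIntegral.integral_of_le hab.le]
      refine setIntegral_congr_fun measurableSet_Ioc fun x _ => ?_
      rw [← Real.rpow_natCast ‖f x‖ 2]; norm_num
    have e3 : (∫ x in a..b, ‖deriv f x‖^2) = ∫ x, ‖deriv f x‖ ^ (2:ℝ) ∂μ := by
      rw [intervalIntegral.integral_of_le hab.le]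
      refine setIntegral_congr_fun measurableSet_Ioc fun x _ => ?_
      rw [← Real.rpow_natCast ‖deriv f x‖ 2]; norm_num
    rw [hK_def, e1, e2, e3, mul_assoc]
    have : (1:ℝ)/2 = 1/(2:ℝ) := rfl
    nlinarith [hH]
  have hsplit : (∫ x in a..b, (‖f x‖^2
        + 2 * (∫ x in a..b, ‖f x‖^2) ^ ((1:ℝ)/2)
            * (∫ x in a..b, ‖deriv f x‖^2) ^ ((1:ℝ)/2)))
      = (∫ x in a..b, ‖f x‖^2)
        + (b - a) * (2 * (∫ x in a..b, ‖f x‖^2) ^ ((1:ℝ)/2)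
            * (∫ x in a..b, ‖deriv f x‖^2) ^ ((1:ℝ)/2)) := by
    rw [intervalIntegral.integral_add hint_g _root_.intervalIntegrable_const,
      intervalIntegral.integral_const, smul_eq_mul]
  rw [hsplit, mul_add]
  have hrw : (1/(b - a)) * ((b - a) * (2 * (∫ x in a..b, ‖f x‖^2) ^ ((1:ℝ)/2)
      * (∫ x in a..b, ‖deriv f x‖^2) ^ ((1:ℝ)/2)))
      = 2 * (∫ x in a..b, ‖f x‖^2) ^ ((1:ℝ)/2)
        * (∫ x in a..b, ‖deriv f x‖^2) ^ ((1:ℝ)/2) := by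
    field_simp
  rw [hrw]
  have hga : (∫ y in a..b, g y) = ∫ x in a..b, ‖f x‖^2 := rfl
  have := hmain
  rw [hga] at this
  have hga2 : g a = ‖f a‖^2 := rfl
  linarith [hKbound]
end
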